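/- Let ψ : R^3 → R be the quadratic form ψ(x) = x_1^2 + x_2^2 − x_3^2 (a Morse singularity of index 1). The set S = H^+ ∪ H^- ∪ R^+ ∪ R^- ∪ Q — where H^± are the discs {ψ = −1, 0 ≤ ±x_3 ≤ 2}, R^± are the rings swept out by gradient trajectories of ψ from ∂H^± to the cylinder L = {ψ = 1}, and Q is the closure of the bounded component of L \ (R^+ ∪ R^-) — is homeomorphic to the 2-sphere, and the closure of the bounded component of R^3 \ S is homeomorphic to the 3-disc. -/

import Mathlib

noncomputable section

/-- The standard index-1 Morse quadratic form `ψ(x) = x₁² + x₂² − x₃²` on ℝ³. -/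
def psi (x : EuclideanSpace ℝ (Fin 3)) : ℝ := x 0 ^ 2 + x 1 ^ 2 - x 2 ^ 2

/-- The gradient of `ψ`: `grad ψ (y) = (2y₁, 2y₂, −2y₃)`. -/
def gradPsi (y : EuclideanSpace ℝ (Fin 3)) : EuclideanSpace ℝ (Fin 3) :=
  (WithLp.equiv 2 (Fin 3 → ℝ)).symm ![2 * y 0, 2 * y 1, -2 * y 2]

/-- The top bay `H⁺ = {ψ = −1, 0 ≤ x₃ ≤ 2}`. -/
def Hplus : Set (EuclideanSpace ℝ (Fin 3)) :=
  {x | psi x = -1 ∧ 0 ≤ x 2 ∧ x 2 ≤ 2}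

/-- The bottom bay `H⁻ = {ψ = −1, −2 ≤ x₃ ≤ 0}`. -/
def Hminus : Set (EuclideanSpace ℝ (Fin 3)) :=
  {x | psi x = -1 ∧ -2 ≤ x 2 ∧ x 2 ≤ 0}

/-- The boundary circle of the bay `H⁺`. -/
def bdHplus : Set (EuclideanSpace ℝ (Fin 3)) := {x | psi x = -1 ∧ x 2 = 2}

/-- The boundary circle of the bay `H⁻`. -/
def bdHminus : Set (EuclideanSpace ℝ (Fin 3)) := {x | psi x = -1 ∧ x 2 = -2}

/-- The cylindrical surface `L = {ψ = 1}`. -/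
def Lcyl : Set (EuclideanSpace ℝ (Fin 3)) := {x | psi x = 1}

/-- The ring swept out by the gradient trajectories of `ψ` (solutions of
`y' = grad ψ (y)`) from the circle `K` to the cylinder `L`. -/
def ringFrom (K : Set (EuclideanSpace ℝ (Fin 3))) : Set (EuclideanSpace ℝ (Fin 3)) :=
  {x | ∃ μ : ℝ, 0 < μ ∧ ∃ c : ℝ → EuclideanSpace ℝ (Fin 3),
    (∀ t ∈ Set.Icc (0 : ℝ) μ, HasDerivAt c (gradPsi (c t)) t) ∧
    c 0 ∈ K ∧ c μ ∈ Lcyl ∧ x ∈ c '' Set.Icc (0 : ℝ) μ}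

/-- The top ring `R⁺`. -/
def Rplus : Set (EuclideanSpace ℝ (Fin 3)) := ringFrom bdHplus

/-- The bottom ring `R⁻`. -/
def Rminus : Set (EuclideanSpace ℝ (Fin 3)) := ringFrom bdHminus

/-- The cloak `Q`: the closure of the bounded component of `L \ (R⁺ ∪ R⁻)`. -/
def Qcloak : Set (EuclideanSpace ℝ (Fin 3)) :=
  closure {y | y ∈ Lcyl \ (Rplus ∪ Rminus) ∧
    Bornology.IsBounded (connectedComponentIn (Lcyl \ (Rplus ∪ Rminus)) y)}

/-- The surface `S = H⁺ ∪ H⁻ ∪ R⁺ ∪ R⁻ ∪ Q`. -/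
def Ssurf : Set (EuclideanSpace ℝ (Fin 3)) := Hplus ∪ Hminus ∪ Rplus ∪ Rminus ∪ Qcloak

-- ======================= auxiliary development =======================

open Set Real

section Aux

local notation "E3" => EuclideanSpace ℝ (Fin 3)

/-! ### Coordinates and the defining function `dd` of the surface -/

def uu (x : EuclideanSpace ℝ (Fin 3)) : ℝ := x 0 ^ 2 + x 1 ^ 2
def vv (x : EuclideanSpace ℝ (Fin 3)) : ℝ := x 2 ^ 2

/-- The defining function of the surface: `Ssurf = {dd = 1}`. -/
def dd (x : EuclideanSpace ℝ (Fin 3)) : ℝ :=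
  if 3 * uu x ≤ 4 * vv x then
    (if 3 * vv x ≤ 4 * uu x then uu x * vv x / 12 else (uu x - vv x) ^ 2)
  else (uu x - vv x) ^ 2

lemma uu_nonneg (x : E3) : 0 ≤ uu x := by unfold uu; positivity
lemma vv_nonneg (x : E3) : 0 ≤ vv x := by unfold vv; positivity

lemma continuous_uu : Continuous uu := by
  have h0 : Continuous fun x : E3 => x 0 := (EuclideanSpace.proj (0 : Fin 3)).continuous
  have h1 : Continuous fun x : E3 => x 1 := (EuclideanSpace.proj (1 : Fin 3)).continuous
  exact (h0.pow 2).add (h1.pow 2)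

lemma continuous_vv : Continuous vv := by
  have h2 : Continuous fun x : E3 => x 2 := (EuclideanSpace.proj (2 : Fin 3)).continuous
  exact h2.pow 2

lemma psi_eq (x : E3) : psi x = uu x - vv x := rfl

lemma continuous_psi : Continuous psi := by
  have h : psi = fun x => uu x - vv x := rfl
  rw [h]; exact continuous_uu.sub continuous_vv

lemma continuous_dd : Continuous dd := by
  unfold dd
  apply Continuous.if_le
  · apply Continuous.if_le
    · exact (continuous_uu.mul continuous_vv).div_const 12
    · exact (continuous_uu.sub continuous_vv).pow 2
    · exact continuous_const.mul continuous_vv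
    · exact continuous_const.mul continuous_uu
    · intro x hx
      have hu := uu_nonneg x
      nlinarith [hx]
  · exact (continuous_uu.sub continuous_vv).pow 2
  · exact continuous_const.mul continuous_uu
  · exact continuous_const.mul continuous_vv
  · intro x hx
    have hv := vv_nonneg x
    have h1 : 3 * vv x ≤ 4 * uu x := by nlinarith
    rw [if_pos h1]
    nlinarith

lemma uu_smul (c : ℝ) (x : E3) : uu (c • x) = c ^ 2 * uu x := by
  simp only [uu]
  have h0 : (c • x) 0 = c * x 0 := rfl
  have h1 : (c • x) 1 = c * x 1 := rfl
  rw [h0, h1]; ring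

lemma vv_smul (c : ℝ) (x : E3) : vv (c • x) = c ^ 2 * vv x := by
  simp only [vv]
  have h2 : (c • x) 2 = c * x 2 := rfl
  rw [h2]; ring

lemma dd_smul (c : ℝ) (x : E3) : dd (c • x) = c ^ 4 * dd x := by
  unfold dd
  rw [uu_smul, vv_smul]
  rcases eq_or_ne c 0 with rfl | hc
  · simp
  have hc2 : 0 < c ^ 2 := by positivity
  have e1 : (3 * (c ^ 2 * uu x) ≤ 4 * (c ^ 2 * vv x)) ↔ (3 * uu x ≤ 4 * vv x) := by
    constructor <;> intro h <;> nlinarith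
  have e2 : (3 * (c ^ 2 * vv x) ≤ 4 * (c ^ 2 * uu x)) ↔ (3 * vv x ≤ 4 * uu x) := by
    constructor <;> intro h <;> nlinarith
  simp only [e1, e2]
  split_ifs <;> ring

lemma norm_sq_eq (x : E3) : ‖x‖ ^ 2 = uu x + vv x := by
  rw [EuclideanSpace.norm_eq, Real.sq_sqrt (by positivity)]
  simp [uu, vv, Fin.sum_univ_three, sq_abs]

lemma dd_nonneg (x : E3) : 0 ≤ dd x := by
  unfold dd
  have hu := uu_nonneg x; have hv := vv_nonneg x
  split_ifs <;> positivity

lemma dd_zero : dd (0 : E3) = 0 := by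
  have h0 : uu (0 : E3) = 0 := by
    have : (0 : E3) 0 = 0 := rfl
    have h' : (0 : E3) 1 = 0 := rfl
    simp [uu, this, h']
  have h1 : vv (0 : E3) = 0 := by
    have : (0 : E3) 2 = 0 := rfl
    simp [vv, this]
  unfold dd
  rw [h0, h1]
  norm_num

lemma dd_pos {x : E3} (hx : x ≠ 0) : 0 < dd x := by
  have hn : 0 < ‖x‖ ^ 2 := by
    have : ‖x‖ ≠ 0 := norm_ne_zero_iff.mpr hx
    positivity
  rw [norm_sq_eq] at hn
  have hu := uu_nonneg x; have hv := vv_nonneg x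
  unfold dd
  split_ifs with h1 h2
  · have hupos : 0 < uu x := by nlinarith
    have hvpos : 0 < vv x := by nlinarith
    positivity
  · push_neg at h2
    have : uu x ≠ vv x := by intro h; rw [h] at h2; nlinarith
    have : uu x - vv x ≠ 0 := sub_ne_zero_of_ne this
    positivity
  · push_neg at h1
    have : uu x ≠ vv x := by intro h; rw [h] at h1; nlinarith
    have : uu x - vv x ≠ 0 := sub_ne_zero_of_ne this
    positivity

lemma dd_le_norm (x : E3) : dd x ≤ ‖x‖ ^ 4 := by
  have hn : ‖x‖ ^ 4 = (uu x + vv x) ^ 2 := by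
    rw [show ‖x‖ ^ 4 = (‖x‖ ^ 2) ^ 2 by ring, norm_sq_eq]
  rw [hn]
  have hu := uu_nonneg x; have hv := vv_nonneg x
  unfold dd
  split_ifs <;> nlinarith

lemma norm_le_of_dd_le_one {x : E3} (h : dd x ≤ 1) : ‖x‖ ≤ 3 := by
  have hu := uu_nonneg x; have hv := vv_nonneg x
  have key : uu x + vv x ≤ 9 := by
    unfold dd at h
    split_ifs at h with h1 h2
    · nlinarith
    · push_neg at h2; nlinarith [sq_nonneg (uu x - vv x)]
    · push_neg at h1; nlinarith [sq_nonneg (uu x - vv x)]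
  have h2 : ‖x‖ ^ 2 ≤ 9 := by rw [norm_sq_eq]; exact key
  nlinarith [norm_nonneg x]

lemma abs_coord2_le_norm (x : E3) : |x 2| ≤ ‖x‖ := by
  have h : x 2 ^ 2 ≤ ‖x‖ ^ 2 := by
    rw [norm_sq_eq]
    have := uu_nonneg x
    simp only [vv] at *
    linarith
  nlinarith [abs_nonneg (x 2), norm_nonneg x, sq_abs (x 2)]

/-! ### ODE facts -/

@[simp] lemma gradPsi_zero (y : E3) : gradPsi y 0 = 2 * y 0 := rfl
@[simp] lemma gradPsi_one (y : E3) : gradPsi y 1 = 2 * y 1 := rfl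
@[simp] lemma gradPsi_two (y : E3) : gradPsi y 2 = -2 * y 2 := rfl

lemma ode_exp {k μ : ℝ} {f : ℝ → ℝ}
    (h : ∀ t ∈ Set.Icc (0:ℝ) μ, HasDerivAt f (k * f t) t) :
    ∀ t ∈ Set.Icc (0:ℝ) μ, f t = f 0 * Real.exp (k * t) := by
  set g : ℝ → ℝ := fun t => f t * Real.exp (-k * t) with hg
  have hg' : ∀ t ∈ Set.Icc (0:ℝ) μ, HasDerivAt g 0 t := by
    intro t ht
    have he : HasDerivAt (fun t => Real.exp (-k * t)) (Real.exp (-k * t) * (-k)) t := by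
      simpa using (((hasDerivAt_id t).const_mul (-k)).exp)
    have := (h t ht).mul he
    exact this.congr_deriv (by ring)
  have hconst : ∀ t ∈ Set.Icc (0:ℝ) μ, g t = g 0 := by
    intro t ht
    exact constant_of_has_deriv_right_zero
      (fun s hs => ((hg' s hs).continuousAt.continuousWithinAt))
      (fun s hs => ((hg' s ⟨hs.1, le_of_lt hs.2⟩).hasDerivWithinAt)) t ht
  intro t ht
  have h1 := hconst t ht
  have h2 : g t * Real.exp (k * t) = f t := by
    simp only [hg]
    rw [mul_assoc, ← Real.exp_add]
    simp
  rw [← h2, h1]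
  simp only [hg]
  simp

lemma hasDerivAt_coord {c : ℝ → E3} {v : EuclideanSpace ℝ (Fin 3)} {t : ℝ}
    (h : HasDerivAt c v t) (i : Fin 3) :
    HasDerivAt (fun s => c s i) (v i) t := by
  have h2 : HasDerivAt (fun s => (PiLp.continuousLinearEquiv 2 ℝ (fun _ : Fin 3 => ℝ)) (c s))
      ((PiLp.continuousLinearEquiv 2 ℝ (fun _ : Fin 3 => ℝ)) v) t :=
    ((PiLp.continuousLinearEquiv 2 ℝ (fun _ : Fin 3 => ℝ)).toContinuousLinearMap.hasFDerivAt).comp_hasDerivAt t h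
  exact hasDerivAt_pi.mp h2 i

def mk3 (a b c : ℝ) : EuclideanSpace ℝ (Fin 3) := (WithLp.equiv 2 (Fin 3 → ℝ)).symm ![a, b, c]

@[simp] lemma mk3_zero (a b c : ℝ) : mk3 a b c 0 = a := rfl
@[simp] lemma mk3_one (a b c : ℝ) : mk3 a b c 1 = b := rfl
@[simp] lemma mk3_two (a b c : ℝ) : mk3 a b c 2 = c := rfl

lemma mk3_hasDerivAt {f g h : ℝ → ℝ} {f' g' h' : ℝ} {t : ℝ}
    (hf : HasDerivAt f f' t) (hg : HasDerivAt g g' t) (hh : HasDerivAt h h' t) :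
    HasDerivAt (fun s => mk3 (f s) (g s) (h s)) (mk3 f' g' h') t := by
  have : HasDerivAt (fun s => ![f s, g s, h s]) ![f', g', h'] t := by
    rw [hasDerivAt_pi]
    intro i
    fin_cases i <;> simpa
  exact ((PiLp.continuousLinearEquiv 2 ℝ (fun _ : Fin 3 => ℝ)).symm.toContinuousLinearMap.hasFDerivAt).comp_hasDerivAt t this

lemma continuous_mk3 {f g h : ℝ → ℝ} (hf : Continuous f) (hg : Continuous g)
    (hh : Continuous h) : Continuous fun s => mk3 (f s) (g s) (h s) := by
  have hp : Continuous fun s => ![f s, g s, h s] := by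
    apply continuous_pi
    intro i
    fin_cases i <;> simpa
  exact (PiLp.continuousLinearEquiv 2 ℝ (fun _ : Fin 3 => ℝ)).symm.continuous.comp hp

lemma ext3 {x y : E3} (h0 : x 0 = y 0) (h1 : x 1 = y 1) (h2 : x 2 = y 2) : x = y := by
  ext i; fin_cases i <;> assumption

lemma hasDerivAt_A_exp (A k s : ℝ) :
    HasDerivAt (fun t => A * Real.exp (k * t)) (k * (A * Real.exp (k * s))) s := by
  have h := (((hasDerivAt_id s).const_mul k).exp).const_mul A
  simp only [id_eq] at h
  exact h.congr_deriv (by ring)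

lemma sqrt3_pos : (0:ℝ) < Real.sqrt 3 := Real.sqrt_pos.mpr (by norm_num)
lemma sqrt3_sq : Real.sqrt 3 ^ 2 = 3 := Real.sq_sqrt (by norm_num)

/-! ### Characterization of the rings -/

lemma ringFrom_eq (ε : ℝ) (hε : ε ^ 2 = 1) :
    ringFrom {x : E3 | psi x = -1 ∧ x 2 = ε * 2} =
    {x : E3 | uu x * vv x = 12 ∧ Real.sqrt 3 ≤ ε * x 2 ∧ ε * x 2 ≤ 2} := by
  ext x
  constructor
  · rintro ⟨μ, hμ, c, hc, h0, hL, t, ht, rfl⟩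
    have e0 : ∀ s ∈ Set.Icc (0:ℝ) μ, c s 0 = c 0 0 * Real.exp (2 * s) :=
      ode_exp (fun s hs => by simpa using hasDerivAt_coord (hc s hs) 0)
    have e1 : ∀ s ∈ Set.Icc (0:ℝ) μ, c s 1 = c 0 1 * Real.exp (2 * s) :=
      ode_exp (fun s hs => by simpa using hasDerivAt_coord (hc s hs) 1)
    have e2 : ∀ s ∈ Set.Icc (0:ℝ) μ, c s 2 = c 0 2 * Real.exp (-2 * s) :=
      ode_exp (fun s hs => by simpa using hasDerivAt_coord (hc s hs) 2)
    set a := c 0 0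
    set b := c 0 1
    have hc02 : c 0 2 = ε * 2 := h0.2
    have hab : a ^ 2 + b ^ 2 = 3 := by
      have h1 : psi (c 0) = -1 := h0.1
      simp only [psi, hc02] at h1
      nlinarith [hε]
    have hμmem : μ ∈ Set.Icc (0:ℝ) μ := ⟨hμ.le, le_refl μ⟩
    set X := Real.exp (2 * μ) with hX
    set Y := Real.exp (-2 * μ) with hY
    have hXY : X * Y = 1 := by rw [hX, hY, ← Real.exp_add]; norm_num
    have hYpos : 0 < Y := Real.exp_pos _
    have hL' : 3 * X ^ 2 - 4 * Y ^ 2 = 1 := by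
      have h1 : psi (c μ) = 1 := hL
      simp only [psi] at h1
      rw [e0 μ hμmem, e1 μ hμmem, e2 μ hμmem, hc02] at h1
      nlinarith [hε]
    have hfact : (3 * X ^ 2 - 4) * (X ^ 2 + 1) = 0 := by
      linear_combination X ^ 2 * hL' + (4 * (X * Y + 1)) * hXY
    have hXpos : 0 < X := Real.exp_pos _
    have hX2 : X ^ 2 = 4 / 3 := by nlinarith
    have hY2 : Y ^ 2 = 3 / 4 := by nlinarith
    have hYval : Y = Real.sqrt 3 / 2 := by
      have h3 : Real.sqrt 3 = 2 * Y := by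
        rw [show (3:ℝ) = (2 * Y) ^ 2 by nlinarith]
        exact Real.sqrt_sq (by positivity)
      linarith
    have hct0 := e0 t ht
    have hct1 := e1 t ht
    have hct2 := e2 t ht
    have hprod : Real.exp (2 * t) * Real.exp (-2 * t) = 1 := by
      rw [← Real.exp_add]; norm_num
    refine ⟨?_, ?_, ?_⟩
    · simp only [uu, vv, hct0, hct1, hct2, hc02]
      linear_combination (4*ε^2*Real.exp (2*t)^2*Real.exp (-2*t)^2) * hab + (12*Real.exp (2*t)^2*Real.exp (-2*t)^2) * hε + (12*(Real.exp (2*t)*Real.exp (-2*t)+1)) * hprod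
    · have hle : Y ≤ Real.exp (-2 * t) := Real.exp_le_exp.mpr (by linarith [ht.2])
      have hgoal : ε * c t 2 = 2 * Real.exp (-2 * t) := by
        rw [hct2, hc02]; linear_combination (2 * Real.exp (-2*t)) * hε
      rw [hgoal]
      rw [hYval] at hle
      linarith
    · have hle : Real.exp (-2 * t) ≤ 1 := Real.exp_le_one_iff.mpr (by linarith [ht.1])
      have hgoal : ε * c t 2 = 2 * Real.exp (-2 * t) := by
        rw [hct2, hc02]; linear_combination (2 * Real.exp (-2*t)) * hε
      rw [hgoal]
      linarith
  · rintro ⟨h12, hw1, hw2⟩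
    simp only [uu, vv] at h12
    set W := ε * x 2 with hW
    have hWpos : 0 < W := lt_of_lt_of_le sqrt3_pos hw1
    have hW2 : W ^ 2 = x 2 ^ 2 := by rw [hW]; nlinarith [hε]
    have hW2ge : 3 ≤ W ^ 2 := by
      nlinarith [sqrt3_sq, hw1, Real.sqrt_nonneg 3]
    set a := x 0 * (W / 2)
    set b := x 1 * (W / 2)
    have hab : a ^ 2 + b ^ 2 = 3 := by
      simp only [a, b]
      have : (x 0 ^ 2 + x 1 ^ 2) * x 2 ^ 2 = 12 := h12
      nlinarith [hW2]
    set μ := Real.log (4 / 3) / 4 with hμdef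
    set t₀ := Real.log (2 / W) / 2 with ht₀def
    have hμpos : 0 < μ := by
      have := Real.log_pos (show (1:ℝ) < 4/3 by norm_num)
      positivity
    have hexp4μ : Real.exp (4 * μ) = 4 / 3 := by
      rw [hμdef, show 4 * (Real.log (4/3) / 4) = Real.log (4/3) by ring]
      exact Real.exp_log (by norm_num)
    have hexp2μ : Real.exp (2 * μ) ^ 2 = 4 / 3 := by
      rw [← hexp4μ, sq, ← Real.exp_add]; ring_nf
    have hexpneg2μ : Real.exp (-2 * μ) ^ 2 = 3 / 4 := by
      have h1 : Real.exp (2 * μ) * Real.exp (-2 * μ) = 1 := by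
        rw [← Real.exp_add]; norm_num
      have h2 : Real.exp (2*μ) ^ 2 * Real.exp (-2*μ) ^ 2 = 1 := by
        linear_combination (Real.exp (2*μ) * Real.exp (-2*μ) + 1) * h1
      linear_combination (3/4) * h2 - (3/4) * Real.exp (-2*μ)^2 * hexp2μ
    have hexpt₀ : Real.exp (2 * t₀) = 2 / W := by
      rw [ht₀def, show 2 * (Real.log (2/W) / 2) = Real.log (2/W) by ring]
      exact Real.exp_log (by positivity)
    have hexpnegt₀ : Real.exp (-2 * t₀) = W / 2 := by
      rw [show (-2:ℝ) * t₀ = -(2 * t₀) by ring, Real.exp_neg, hexpt₀]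
      rw [inv_div]
    have ht₀0 : 0 ≤ t₀ := by
      rw [ht₀def]
      have : (1:ℝ) ≤ 2 / W := (one_le_div hWpos).mpr hw2
      have := Real.log_nonneg this
      positivity
    have ht₀μ : t₀ ≤ μ := by
      have hsq : (2 / W) ^ 2 ≤ 4 / 3 := by
        rw [div_pow]
        rw [div_le_div_iff₀ (by positivity) (by norm_num)]
        nlinarith
      have hlog : Real.log ((2 / W) ^ 2) ≤ Real.log (4 / 3) := by
        apply Real.log_le_log (by positivity) hsq
      rw [Real.log_pow] at hlog
      rw [ht₀def, hμdef]
      push_cast at hlog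
      linarith
    refine ⟨μ, hμpos, fun s => mk3 (a * Real.exp (2 * s)) (b * Real.exp (2 * s))
      (ε * 2 * Real.exp (-2 * s)), ?_, ?_, ?_, ?_⟩
    · intro s _
      have h0 := hasDerivAt_A_exp a 2 s
      have h1 := hasDerivAt_A_exp b 2 s
      have h2 := hasDerivAt_A_exp (ε * 2) (-2) s
      have h := mk3_hasDerivAt h0 h1 h2
      exact h
    · constructor
      · show psi _ = -1
        simp only [psi, mk3_zero, mk3_one, mk3_two, mul_zero, Real.exp_zero]
        linear_combination hab - 4 * hε
      · show (mk3 _ _ _) 2 = ε * 2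
        simp
    · show psi _ = 1
      simp only [psi, mk3_zero, mk3_one, mk3_two]
      linear_combination Real.exp (2*μ)^2 * hab + 3 * hexp2μ - 4 * Real.exp (-2*μ)^2 * hε - 4 * hexpneg2μ
    · refine ⟨t₀, ⟨ht₀0, ht₀μ⟩, ?_⟩
      have hWne : W ≠ 0 := ne_of_gt hWpos
      refine ext3 ?_ ?_ ?_
      · show a * Real.exp (2 * t₀) = x 0
        rw [hexpt₀]
        field_simp
        show x 0 * (W / 2) * 2 = W * x 0
        ring
      · show b * Real.exp (2 * t₀) = x 1
        rw [hexpt₀]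
        field_simp
        show x 1 * (W / 2) * 2 = W * x 1
        ring
      · show ε * 2 * Real.exp (-2 * t₀) = x 2
        rw [hexpnegt₀]
        linear_combination x 2 * hε

lemma Rplus_eq : Rplus =
    {x : E3 | uu x * vv x = 12 ∧ Real.sqrt 3 ≤ x 2 ∧ x 2 ≤ 2} := by
  have h := ringFrom_eq 1 (by norm_num)
  simp only [one_mul] at h
  exact h

lemma Rminus_eq : Rminus =
    {x : E3 | uu x * vv x = 12 ∧ Real.sqrt 3 ≤ -x 2 ∧ -x 2 ≤ 2} := by
  have h := ringFrom_eq (-1) (by norm_num)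
  norm_num at h
  exact h

/-! ### The cloak -/

lemma sqrt3_le_two : Real.sqrt 3 ≤ 2 := by nlinarith [sqrt3_sq, sqrt3_pos]

lemma LRR_eq : Lcyl \ (Rplus ∪ Rminus) = {y : E3 | psi y = 1 ∧ vv y ≠ 3} := by
  ext y
  simp only [Lcyl, Rplus_eq, Rminus_eq, Set.mem_diff, Set.mem_union, Set.mem_setOf_eq]
  constructor
  · rintro ⟨h1, h2⟩
    refine ⟨h1, fun hv => h2 ?_⟩
    have hpsi := psi_eq y
    have huu : uu y = 4 := by linarith
    have huv : uu y * vv y = 12 := by rw [huu, hv]; norm_num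
    have hy3 : y 2 ^ 2 = 3 := hv
    rcases le_or_gt 0 (y 2) with hs | hs
    · left
      have habs : y 2 = Real.sqrt 3 := by
        rw [← hy3]; exact (Real.sqrt_sq hs).symm
      exact ⟨huv, le_of_eq habs.symm, by rw [habs]; exact sqrt3_le_two⟩
    · right
      have hs' : 0 ≤ -y 2 := by linarith
      have habs : -y 2 = Real.sqrt 3 := by
        rw [show (3:ℝ) = (-y 2)^2 by nlinarith]
        exact (Real.sqrt_sq hs').symm
      exact ⟨huv, le_of_eq habs.symm, by rw [habs]; exact sqrt3_le_two⟩
  · rintro ⟨h1, h2⟩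
    refine ⟨h1, ?_⟩
    have hpsi := psi_eq y
    have huu : uu y = vv y + 1 := by linarith
    rintro (⟨huv, _, _⟩ | ⟨huv, _, _⟩) <;>
    · apply h2
      have hf : (vv y - 3) * (vv y + 4) = 0 := by linear_combination huv - vv y * huu
      rcases mul_eq_zero.mp hf with h | h
      · linarith
      · linarith [vv_nonneg y]

/-- meridian curve on the cylinder through `y` -/
def merid (y : E3) (s : ℝ) : EuclideanSpace ℝ (Fin 3) :=
  mk3 (y 0 * Real.sqrt ((1 + s^2)/(1 + (y 2)^2)))
      (y 1 * Real.sqrt ((1 + s^2)/(1 + (y 2)^2))) s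

lemma continuous_merid (y : E3) : Continuous (merid y) := by
  unfold merid
  have hk : Continuous fun s : ℝ => Real.sqrt ((1 + s^2)/(1 + (y 2)^2)) :=
    Real.continuous_sqrt.comp ((continuous_const.add (continuous_pow 2)).div_const _)
  exact continuous_mk3 (continuous_const.mul hk) (continuous_const.mul hk) continuous_id

lemma merid_uu (y : E3) (hpsi : psi y = 1) (s : ℝ) : uu (merid y s) = 1 + s^2 := by
  have hpy := psi_eq y
  have huu : uu y = 1 + vv y := by linarith
  have hk : Real.sqrt ((1 + s^2)/(1 + (y 2)^2)) ^ 2 = (1 + s^2)/(1 + (y 2)^2) :=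
    Real.sq_sqrt (by positivity)
  show (y 0 * _)^2 + (y 1 * _)^2 = 1 + s^2
  have hne : (1:ℝ) + (y 2)^2 ≠ 0 := by positivity
  have huu' : y 0 ^2 + y 1 ^2 = 1 + y 2 ^2 := huu
  have hring : (y 0 * Real.sqrt ((1 + s^2)/(1 + (y 2)^2)))^2 +
      (y 1 * Real.sqrt ((1 + s^2)/(1 + (y 2)^2)))^2 =
      (y 0 ^2 + y 1 ^2) * Real.sqrt ((1 + s^2)/(1 + (y 2)^2))^2 := by ring
  rw [hring, huu', hk]
  field_simp

lemma merid_vv (y : E3) (s : ℝ) : vv (merid y s) = s ^ 2 := rfl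

lemma merid_psi (y : E3) (hpsi : psi y = 1) (s : ℝ) : psi (merid y s) = 1 := by
  rw [psi_eq, merid_uu y hpsi s, merid_vv]; ring

lemma merid_self (y : E3) (hy : y 2 ≠ 0) : merid y (y 2) = y := by
  have hne : (1:ℝ) + (y 2)^2 ≠ 0 := by positivity
  have hk : Real.sqrt ((1 + (y 2)^2)/(1 + (y 2)^2)) = 1 := by
    rw [div_self hne, Real.sqrt_one]
  refine ext3 ?_ ?_ ?_ <;> show _ = _
  · show y 0 * Real.sqrt ((1 + (y 2)^2)/(1 + (y 2)^2)) = y 0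
    rw [hk]; ring
  · show y 1 * Real.sqrt ((1 + (y 2)^2)/(1 + (y 2)^2)) = y 1
    rw [hk]; ring
  · rfl

lemma unbounded_of_vv_gt {y : E3} (h1 : psi y = 1) (h3 : 3 < vv y) :
    ¬ Bornology.IsBounded (connectedComponentIn {z : E3 | psi z = 1 ∧ vv z ≠ 3} y) := by
  intro hb
  have hvy : y 2 ^ 2 > 3 := h3
  have hy2 : y 2 ≠ 0 := by intro h0; rw [h0] at hvy; norm_num at hvy
  rcases le_or_gt 0 (y 2) with hs | hs
  · -- upward ray
    set ray := merid y '' Set.Ici (y 2) with hray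
    have hsub : ray ⊆ {z : E3 | psi z = 1 ∧ vv z ≠ 3} := by
      rintro _ ⟨s, hsmem, rfl⟩
      refine ⟨merid_psi y h1 s, ?_⟩
      rw [merid_vv]
      have : y 2 ≤ s := hsmem
      nlinarith
    have hpre : IsPreconnected ray :=
      isPreconnected_Ici.image _ (continuous_merid y).continuousOn
    have hmem : y ∈ ray := ⟨y 2, self_mem_Ici, merid_self y hy2⟩
    have hcc := hpre.subset_connectedComponentIn hmem hsub
    have hbray := hb.subset hcc
    rw [isBounded_iff_forall_norm_le] at hbray
    obtain ⟨C, hC⟩ := hbray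
    set s₁ := max (y 2) (|C| + 1) with hs₁
    have hmem₁ : merid y s₁ ∈ ray := ⟨s₁, Set.mem_Ici.mpr (le_max_left _ _), rfl⟩
    have h1' := hC _ hmem₁
    have h2' : |C| + 1 ≤ s₁ := le_max_right _ _
    have h3' : |(merid y s₁) 2| ≤ ‖merid y s₁‖ := abs_coord2_le_norm _
    have h4' : (merid y s₁) 2 = s₁ := rfl
    rw [h4'] at h3'
    have h5' : s₁ ≤ |s₁| := le_abs_self _
    have := le_abs_self C
    have := abs_nonneg C
    linarith
  · -- downward ray
    set ray := merid y '' Set.Iic (y 2) with hray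
    have hsub : ray ⊆ {z : E3 | psi z = 1 ∧ vv z ≠ 3} := by
      rintro _ ⟨s, hsmem, rfl⟩
      refine ⟨merid_psi y h1 s, ?_⟩
      rw [merid_vv]
      have : s ≤ y 2 := hsmem
      nlinarith
    have hpre : IsPreconnected ray :=
      isPreconnected_Iic.image _ (continuous_merid y).continuousOn
    have hmem : y ∈ ray := ⟨y 2, self_mem_Iic, merid_self y hy2⟩
    have hcc := hpre.subset_connectedComponentIn hmem hsub
    have hbray := hb.subset hcc
    rw [isBounded_iff_forall_norm_le] at hbray
    obtain ⟨C, hC⟩ := hbray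
    set s₁ := min (y 2) (-(|C| + 1)) with hs₁
    have hmem₁ : merid y s₁ ∈ ray := ⟨s₁, Set.mem_Iic.mpr (min_le_left _ _), rfl⟩
    have h1' := hC _ hmem₁
    have h2' : s₁ ≤ -(|C| + 1) := min_le_right _ _
    have h3' : |(merid y s₁) 2| ≤ ‖merid y s₁‖ := abs_coord2_le_norm _
    have h4' : (merid y s₁) 2 = s₁ := rfl
    rw [h4'] at h3'
    have h5' : -s₁ ≤ |s₁| := neg_le_abs _
    have := le_abs_self C
    have := abs_nonneg C
    linarith

lemma Q_inner_eq :
    {y | y ∈ Lcyl \ (Rplus ∪ Rminus) ∧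
      Bornology.IsBounded (connectedComponentIn (Lcyl \ (Rplus ∪ Rminus)) y)} =
    {y : E3 | psi y = 1 ∧ vv y < 3} := by
  have hL := LRR_eq
  ext y
  simp only [Set.mem_setOf_eq, hL]
  constructor
  · rintro ⟨⟨h1, h2⟩, hb⟩
    refine ⟨h1, ?_⟩
    rcases lt_or_gt_of_ne h2 with h | h
    · exact h
    · exact absurd hb (unbounded_of_vv_gt h1 h)
  · rintro ⟨h1, h2⟩
    have hyA : y ∈ {z : E3 | psi z = 1 ∧ vv z ≠ 3} := ⟨h1, ne_of_lt h2⟩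
    refine ⟨hyA, ?_⟩
    have hsub : connectedComponentIn {z : E3 | psi z = 1 ∧ vv z ≠ 3} y ⊆
        {z : E3 | vv z < 3} := by
      apply IsPreconnected.subset_left_of_subset_union
        (u := {z : E3 | vv z < 3}) (v := {z : E3 | 3 < vv z})
        (isOpen_lt continuous_vv continuous_const)
        (isOpen_lt continuous_const continuous_vv)
      · rw [Set.disjoint_left]
        rintro z hz1 hz2
        simp only [Set.mem_setOf_eq] at hz1 hz2
        linarith
      · intro z hz
        have hzA := connectedComponentIn_subset {z : E3 | psi z = 1 ∧ vv z ≠ 3} y hz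
        rcases lt_or_gt_of_ne hzA.2 with h | h
        · exact Or.inl h
        · exact Or.inr h
      · exact ⟨y, mem_connectedComponentIn hyA, h2⟩
      · exact isPreconnected_connectedComponentIn
    apply Bornology.IsBounded.subset (Metric.isBounded_closedBall (x := (0:E3)) (r := 3))
    intro z hz
    have hz3 : vv z < 3 := hsub hz
    have hzA := connectedComponentIn_subset {z : E3 | psi z = 1 ∧ vv z ≠ 3} y hz
    have hzpsi : psi z = 1 := hzA.1
    rw [Metric.mem_closedBall, dist_zero_right]
    have hpz := psi_eq z
    have h9 : ‖z‖^2 ≤ 9 := by rw [norm_sq_eq]; nlinarith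
    nlinarith [norm_nonneg z]

/-- approach curve for the closure of the cloak -/
def appr (x : E3) (t : ℝ) : EuclideanSpace ℝ (Fin 3) :=
  mk3 (x 0 * Real.sqrt ((1 + 3*t^2)/4)) (x 1 * Real.sqrt ((1 + 3*t^2)/4)) (x 2 * t)

lemma continuous_appr (x : E3) : Continuous (appr x) := by
  unfold appr
  have hk : Continuous fun t : ℝ => Real.sqrt ((1 + 3*t^2)/4) :=
    Real.continuous_sqrt.comp ((continuous_const.add (continuous_const.mul (continuous_pow 2))).div_const _)
  exact continuous_mk3 (continuous_const.mul hk) (continuous_const.mul hk)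
    (continuous_const.mul continuous_id)

lemma Qcloak_eq : Qcloak = {x : E3 | psi x = 1 ∧ vv x ≤ 3} := by
  show closure _ = _
  rw [Q_inner_eq]
  apply Set.Subset.antisymm
  · apply closure_minimal
    · intro z hz; exact ⟨hz.1, le_of_lt hz.2⟩
    · have hrw : {x : E3 | psi x = 1 ∧ vv x ≤ 3} =
          {x : E3 | psi x = 1} ∩ {x : E3 | vv x ≤ 3} := rfl
      rw [hrw]
      exact (isClosed_eq continuous_psi continuous_const).inter
        (isClosed_le continuous_vv continuous_const)
  · rintro x ⟨h1, h2⟩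
    rcases lt_or_eq_of_le h2 with h | h
    · exact subset_closure ⟨h1, h⟩
    · -- vv x = 3 : boundary circle, approximate from inside
      have hv3 : x 2 ^ 2 = 3 := h
      have hpx : uu x - vv x = 1 := by rw [← psi_eq]; exact h1
      have huu : x 0 ^ 2 + x 1 ^ 2 = 4 := by
        have h4 : uu x = 4 := by rw [h] at hpx; linarith
        exact h4
      have hkk : ∀ t : ℝ, Real.sqrt ((1 + 3*t^2)/4) ^ 2 = (1 + 3*t^2)/4 :=
        fun t => Real.sq_sqrt (by positivity)
      have happr1 : appr x 1 = x := by
        have hk1 : Real.sqrt ((1 + 3*(1:ℝ)^2)/4) = 1 := by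
          norm_num
        refine ext3 ?_ ?_ ?_
        · show x 0 * Real.sqrt ((1 + 3*(1:ℝ)^2)/4) = x 0
          rw [hk1]; ring
        · show x 1 * Real.sqrt ((1 + 3*(1:ℝ)^2)/4) = x 1
          rw [hk1]; ring
        · show x 2 * 1 = x 2
          ring
      have htend : Filter.Tendsto (appr x) (nhdsWithin 1 (Set.Iio 1)) (nhds x) := by
        have h0 : Filter.Tendsto (appr x) (nhdsWithin 1 (Set.Iio 1)) (nhds (appr x 1)) :=
          ((continuous_appr x).tendsto 1).mono_left nhdsWithin_le_nhds
        rwa [happr1] at h0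
      apply mem_closure_of_tendsto htend
      have hIoo : Set.Ioo (0:ℝ) 1 ∈ nhdsWithin (1:ℝ) (Set.Iio 1) :=
        Ioo_mem_nhdsLT_of_mem ⟨by norm_num, le_refl 1⟩
      apply Filter.mem_of_superset hIoo
      rintro t ⟨ht0, ht1⟩
      have huuat : uu (appr x t) = 1 + 3*t^2 := by
        show (x 0 * _)^2 + (x 1 * _)^2 = _
        have := hkk t
        nlinarith [huu]
      have hvvat : vv (appr x t) = 3*t^2 := by
        show (x 2 * t)^2 = _
        nlinarith [hv3]
      constructor
      · rw [psi_eq, huuat, hvvat]; ring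
      · rw [hvvat]; nlinarith

/-! ### The surface is the level set `{dd = 1}` -/

lemma Ssurf_eq : Ssurf = {x : E3 | dd x = 1} := by
  ext x
  have hu := uu_nonneg x
  have hv := vv_nonneg x
  have hpsi := psi_eq x
  constructor
  · intro hx
    show dd x = 1
    rcases hx with ((((hH | hH) | hR) | hR) | hQ)
    · obtain ⟨h1, h2, h3⟩ := hH
      have huv : uu x - vv x = -1 := by linarith
      have hvle : vv x ≤ 4 := by show x 2^2 ≤ 4; nlinarith
      unfold dd
      split_ifs with hc1 hc2
      · have h4 : vv x = 4 := by linarith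
        have h5 : uu x = 3 := by linarith
        rw [h4, h5]; norm_num
      · rw [show uu x - vv x = -1 from huv]; norm_num
      · exfalso; push_neg at hc1; linarith
    · obtain ⟨h1, h2, h3⟩ := hH
      have huv : uu x - vv x = -1 := by linarith
      have hvle : vv x ≤ 4 := by show x 2^2 ≤ 4; nlinarith
      unfold dd
      split_ifs with hc1 hc2
      · have h4 : vv x = 4 := by linarith
        have h5 : uu x = 3 := by linarith
        rw [h4, h5]; norm_num
      · rw [show uu x - vv x = -1 from huv]; norm_num
      · exfalso; push_neg at hc1; linarith
    · rw [Rplus_eq] at hR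
      obtain ⟨h12, hw1, hw2⟩ := hR
      have hv3 : 3 ≤ vv x := by show 3 ≤ x 2^2; nlinarith [sqrt3_sq, Real.sqrt_nonneg 3]
      have hv4 : vv x ≤ 4 := by show x 2^2 ≤ 4; nlinarith [sqrt3_pos]
      unfold dd
      split_ifs with hc1 hc2
      · rw [h12]; norm_num
      · exfalso; push_neg at hc2; nlinarith
      · exfalso; push_neg at hc1; nlinarith
    · rw [Rminus_eq] at hR
      obtain ⟨h12, hw1, hw2⟩ := hR
      have hv3 : 3 ≤ vv x := by show 3 ≤ x 2^2; nlinarith [sqrt3_sq, Real.sqrt_nonneg 3]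
      have hv4 : vv x ≤ 4 := by show x 2^2 ≤ 4; nlinarith [sqrt3_pos]
      unfold dd
      split_ifs with hc1 hc2
      · rw [h12]; norm_num
      · exfalso; push_neg at hc2; nlinarith
      · exfalso; push_neg at hc1; nlinarith
    · rw [Qcloak_eq] at hQ
      obtain ⟨h1, h2⟩ := hQ
      have huv : uu x - vv x = 1 := by linarith
      unfold dd
      split_ifs with hc1 hc2
      · have hv3 : vv x = 3 := by linarith
        have hu4 : uu x = 4 := by linarith
        rw [hv3, hu4]; norm_num
      · rw [huv]; norm_num
      · rw [huv]; norm_num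
  · intro hx
    have hdd : dd x = 1 := hx
    unfold dd at hdd
    split_ifs at hdd with hc1 hc2
    · have huv : uu x * vv x = 12 := by linarith
      have hvne : vv x ≠ 0 := by
        intro h0; rw [h0, mul_zero] at huv; norm_num at huv
      have hvpos : 0 < vv x := lt_of_le_of_ne hv (Ne.symm hvne)
      have hv3 : 3 ≤ vv x := by nlinarith
      have hv4 : vv x ≤ 4 := by nlinarith
      rcases le_or_gt 0 (x 2) with hs | hs
      · have h2a : Real.sqrt 3 ≤ x 2 := by
          have h' : Real.sqrt 3 ≤ Real.sqrt (x 2^2) := Real.sqrt_le_sqrt hv3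
          rwa [Real.sqrt_sq hs] at h'
        have h2b : x 2 ≤ 2 := by
          have : x 2^2 ≤ 4 := hv4
          nlinarith
        have hmem : x ∈ Rplus := by rw [Rplus_eq]; exact ⟨huv, h2a, h2b⟩
        simp only [Ssurf, Set.mem_union]; tauto
      · have hs' : 0 ≤ -x 2 := by linarith
        have h2a : Real.sqrt 3 ≤ -x 2 := by
          have heq : (-x 2)^2 = x 2^2 := by ring
          have h' : Real.sqrt 3 ≤ Real.sqrt ((-x 2)^2) := by
            rw [heq]; exact Real.sqrt_le_sqrt hv3
          rwa [Real.sqrt_sq hs'] at h'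
        have h2b : -x 2 ≤ 2 := by
          have : x 2^2 ≤ 4 := hv4
          nlinarith
        have hmem : x ∈ Rminus := by rw [Rminus_eq]; exact ⟨huv, h2a, h2b⟩
        simp only [Ssurf, Set.mem_union]; tauto
    · push_neg at hc2
      have hf : (uu x - vv x - 1) * (uu x - vv x + 1) = 0 := by linear_combination hdd
      rcases mul_eq_zero.mp hf with h | h
      · exfalso; nlinarith
      · have huv : uu x - vv x = -1 := by linarith
        have hv4 : vv x < 4 := by linarith
        have hx2 : x 2^2 < 4 := hv4
        rcases le_or_gt 0 (x 2) with hs | hs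
        · have hmem : x ∈ Hplus := ⟨by rw [psi_eq]; linarith, hs, by nlinarith⟩
          simp only [Ssurf, Set.mem_union]; tauto
        · have hmem : x ∈ Hminus := ⟨by rw [psi_eq]; linarith, by nlinarith, le_of_lt hs⟩
          simp only [Ssurf, Set.mem_union]; tauto
    · push_neg at hc1
      have hf : (uu x - vv x - 1) * (uu x - vv x + 1) = 0 := by linear_combination hdd
      rcases mul_eq_zero.mp hf with h | h
      · have hmem : x ∈ Qcloak := by
          rw [Qcloak_eq]
          exact ⟨by rw [psi_eq]; linarith, by linarith⟩
        simp only [Ssurf, Set.mem_union]; tauto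
      · exfalso; nlinarith

/-! ### The complement of the surface -/

lemma compl_eq : Ssurfᶜ = {x : E3 | dd x < 1} ∪ {x : E3 | 1 < dd x} := by
  rw [Ssurf_eq]
  ext x
  simp only [Set.mem_compl_iff, Set.mem_setOf_eq, Set.mem_union]
  constructor
  · exact fun h => lt_or_gt_of_ne h
  · rintro (h | h) <;> intro he <;> linarith

lemma cc_lt {x : E3} (h : dd x < 1) :
    connectedComponentIn Ssurfᶜ x ⊆ {z : E3 | dd z < 1} := by
  apply IsPreconnected.subset_left_of_subset_union
    (u := {z : E3 | dd z < 1}) (v := {z : E3 | 1 < dd z})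
    (isOpen_lt continuous_dd continuous_const)
    (isOpen_lt continuous_const continuous_dd)
  · rw [Set.disjoint_left]
    rintro z h1 h2
    simp only [Set.mem_setOf_eq] at h1 h2
    linarith
  · intro z hz
    have hz' := connectedComponentIn_subset Ssurfᶜ x hz
    rw [compl_eq] at hz'
    exact hz'
  · refine ⟨x, mem_connectedComponentIn ?_, h⟩
    rw [compl_eq]
    exact Or.inl h
  · exact isPreconnected_connectedComponentIn

lemma bounded_of_dd_lt {x : E3} (h : dd x < 1) :
    Bornology.IsBounded (connectedComponentIn Ssurfᶜ x) := by
  apply Bornology.IsBounded.subset (Metric.isBounded_closedBall (x := (0:E3)) (r := 3))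
  intro z hz
  have hlt : dd z < 1 := cc_lt h hz
  rw [Metric.mem_closedBall, dist_zero_right]
  exact norm_le_of_dd_le_one (le_of_lt hlt)

lemma unbounded_of_dd_gt {x : E3} (h : 1 < dd x) :
    ¬ Bornology.IsBounded (connectedComponentIn Ssurfᶜ x) := by
  intro hb
  have hx0 : x ≠ 0 := by intro h0; rw [h0, dd_zero] at h; linarith
  set ray := (fun c : ℝ => c • x) '' Set.Ici 1 with hray
  have hsub : ray ⊆ Ssurfᶜ := by
    rintro _ ⟨c, hc, rfl⟩
    rw [compl_eq]
    right
    show 1 < dd (c • x)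
    rw [dd_smul]
    have hc1 : (1:ℝ) ≤ c := hc
    have hc4 : (1:ℝ) ≤ c^4 := one_le_pow₀ hc1
    nlinarith [hc4]
  have hpre : IsPreconnected ray :=
    isPreconnected_Ici.image _ (continuous_id.smul continuous_const).continuousOn
  have hmem : x ∈ ray := ⟨1, Set.self_mem_Ici, one_smul ℝ x⟩
  have hcc := hpre.subset_connectedComponentIn hmem hsub
  have hbray := hb.subset hcc
  rw [isBounded_iff_forall_norm_le] at hbray
  obtain ⟨C, hC⟩ := hbray
  have hxpos : 0 < ‖x‖ := norm_pos_iff.mpr hx0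
  set c := (|C| + 1) / ‖x‖ + 1 with hc
  have hc1 : (1:ℝ) ≤ c := by
    rw [hc]
    have : 0 ≤ (|C| + 1) / ‖x‖ := by positivity
    linarith
  have hCc := hC (c • x) ⟨c, hc1, rfl⟩
  rw [norm_smul, Real.norm_eq_abs, abs_of_pos (by positivity)] at hCc
  have hval : c * ‖x‖ = |C| + 1 + ‖x‖ := by
    rw [hc]
    field_simp
  rw [hval] at hCc
  have := le_abs_self C
  linarith

lemma bounded_set_eq :
    {x : EuclideanSpace ℝ (Fin 3) | x ∉ Ssurf ∧
      Bornology.IsBounded (connectedComponentIn Ssurfᶜ x)} = {x : E3 | dd x < 1} := by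
  ext x
  simp only [Set.mem_setOf_eq]
  constructor
  · rintro ⟨hns, hb⟩
    have hne : dd x ≠ 1 := by
      intro h1
      exact hns (by rw [Ssurf_eq]; exact h1)
    rcases lt_or_gt_of_ne hne with h | h
    · exact h
    · exact absurd hb (unbounded_of_dd_gt h)
  · intro h
    refine ⟨?_, bounded_of_dd_lt h⟩
    rw [Ssurf_eq]
    intro hmem
    have : dd x = 1 := hmem
    linarith

lemma closure_lt_eq : closure {x : E3 | dd x < 1} = {x : E3 | dd x ≤ 1} := by
  apply Set.Subset.antisymm
  · exact closure_minimal (fun z hz => show dd z ≤ 1 from le_of_lt hz)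
      (isClosed_le continuous_dd continuous_const)
  · intro x hx
    rcases lt_or_eq_of_le (show dd x ≤ 1 from hx) with h | h
    · exact subset_closure h
    · have htend : Filter.Tendsto (fun t : ℝ => t • x) (nhdsWithin 1 (Set.Iio 1)) (nhds x) := by
        have h0 : Filter.Tendsto (fun t : ℝ => t • x) (nhds 1) (nhds ((1:ℝ) • x)) :=
          (continuous_id.smul continuous_const).tendsto 1
        rw [one_smul] at h0
        exact h0.mono_left nhdsWithin_le_nhds
      apply mem_closure_of_tendsto htend
      have hIoo : Set.Ioo (0:ℝ) 1 ∈ nhdsWithin (1:ℝ) (Set.Iio 1) :=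
        Ioo_mem_nhdsLT_of_mem ⟨by norm_num, le_refl 1⟩
      apply Filter.mem_of_superset hIoo
      rintro t ⟨ht0, ht1⟩
      show dd (t • x) < 1
      rw [dd_smul, h, mul_one]
      have h2 : t^2 < 1 := by nlinarith
      nlinarith [h2, sq_nonneg t]

/-! ### The homeomorphisms -/

lemma sqrt_sqrt_pow4 {a : ℝ} (ha : 0 ≤ a) : Real.sqrt (Real.sqrt a) ^ 4 = a := by
  rw [show (Real.sqrt (Real.sqrt a))^4 = ((Real.sqrt (Real.sqrt a))^2)^2 by ring,
    Real.sq_sqrt (Real.sqrt_nonneg a), Real.sq_sqrt ha]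

lemma ne_zero_of_dd_eq_one {x : E3} (h : dd x = 1) : x ≠ 0 := by
  intro h0; rw [h0, dd_zero] at h; norm_num at h

lemma isCompact_sphereSet : IsCompact {x : E3 | dd x = 1} := by
  apply Metric.isCompact_of_isClosed_isBounded
  · exact isClosed_eq continuous_dd continuous_const
  · apply Bornology.IsBounded.subset (Metric.isBounded_closedBall (x := (0:E3)) (r := 3))
    intro z hz
    rw [Metric.mem_closedBall, dist_zero_right]
    exact norm_le_of_dd_le_one (le_of_eq hz)

lemma isCompact_ballSet : IsCompact {x : E3 | dd x ≤ 1} := by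
  apply Metric.isCompact_of_isClosed_isBounded
  · exact isClosed_le continuous_dd continuous_const
  · apply Bornology.IsBounded.subset (Metric.isBounded_closedBall (x := (0:E3)) (r := 3))
    intro z hz
    rw [Metric.mem_closedBall, dist_zero_right]
    exact norm_le_of_dd_le_one hz

def sphMap : {x : E3 | dd x = 1} → Metric.sphere (0:EuclideanSpace ℝ (Fin 3)) 1 :=
  fun x => ⟨‖(x : E3)‖⁻¹ • (x : E3), by
    have hx0 := ne_zero_of_dd_eq_one x.2
    have hn : ‖(x : E3)‖ ≠ 0 := norm_ne_zero_iff.mpr hx0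
    rw [mem_sphere_zero_iff_norm, norm_smul, Real.norm_eq_abs,
      abs_of_nonneg (inv_nonneg.mpr (norm_nonneg _)), inv_mul_cancel₀ hn]⟩

lemma pow4_eq_one {k : ℝ} (hk : 0 < k) (h : k ^ 4 = 1) : k = 1 := by
  have hf : (k - 1) * (k^3 + k^2 + k + 1) = 0 := by linear_combination h
  rcases mul_eq_zero.mp hf with h' | h'
  · linarith
  · nlinarith

lemma sphMap_bij : Function.Bijective sphMap := by
  constructor
  · rintro ⟨x, hx⟩ ⟨y, hy⟩ h
    simp only [sphMap, Subtype.mk.injEq] at h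
    have hx1 : dd x = 1 := hx
    have hy1 : dd y = 1 := hy
    have hx0 := ne_zero_of_dd_eq_one hx1
    have hy0 := ne_zero_of_dd_eq_one hy1
    have hxn : (0:ℝ) < ‖x‖ := norm_pos_iff.mpr hx0
    have hyn : (0:ℝ) < ‖y‖ := norm_pos_iff.mpr hy0
    have hxy : x = (‖x‖ * ‖y‖⁻¹) • y := by
      have h2 := congrArg (fun z : EuclideanSpace ℝ (Fin 3) => ‖x‖ • z) h
      simp only [smul_smul] at h2
      rwa [mul_inv_cancel₀ (ne_of_gt hxn), one_smul] at h2
    set k := ‖x‖ * ‖y‖⁻¹ with hk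
    have hkpos : 0 < k := by positivity
    have hdd : dd x = k^4 * dd y := by rw [hxy, dd_smul]
    rw [hx1, hy1, mul_one] at hdd
    have hk1 : k = 1 := pow4_eq_one hkpos hdd.symm
    apply Subtype.ext
    show x = y
    rw [hxy, hk1, one_smul]
  · rintro ⟨u, hu⟩
    have hun : ‖u‖ = 1 := by rwa [mem_sphere_zero_iff_norm] at hu
    have hu0 : u ≠ 0 := by intro h0; rw [h0, norm_zero] at hun; norm_num at hun
    have hd : 0 < dd u := dd_pos hu0
    set c := (Real.sqrt (Real.sqrt (dd u)))⁻¹ with hc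
    have hsq : 0 < Real.sqrt (Real.sqrt (dd u)) := Real.sqrt_pos.mpr (Real.sqrt_pos.mpr hd)
    have hc4 : c^4 * dd u = 1 := by
      rw [hc, inv_pow, sqrt_sqrt_pow4 (le_of_lt hd), inv_mul_cancel₀ (ne_of_gt hd)]
    refine ⟨⟨c • u, ?_⟩, ?_⟩
    · show dd (c • u) = 1
      rw [dd_smul]
      exact hc4
    · apply Subtype.ext
      show ‖c • u‖⁻¹ • (c • u) = u
      rw [norm_smul, hun, Real.norm_eq_abs, abs_of_pos (by positivity), mul_one, smul_smul,
        inv_mul_cancel₀ (by positivity), one_smul]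

lemma continuous_sphMap : Continuous sphMap := by
  apply Continuous.subtype_mk
  have h1 : Continuous fun x : {x : E3 | dd x = 1} => ‖(x : E3)‖⁻¹ :=
    (continuous_subtype_val.norm).inv₀
      (fun x => norm_ne_zero_iff.mpr (ne_zero_of_dd_eq_one x.2))
  exact h1.smul continuous_subtype_val

lemma homeo_sphere : Nonempty
    ({x : E3 | dd x = 1} ≃ₜ Metric.sphere (0:EuclideanSpace ℝ (Fin 3)) 1) := by
  haveI : CompactSpace {x : E3 | dd x = 1} := isCompact_iff_compactSpace.mp isCompact_sphereSet
  exact ⟨Continuous.homeoOfEquivCompactToT2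
    (f := Equiv.ofBijective sphMap sphMap_bij) continuous_sphMap⟩

/-- The radial "flattening" map onto the unit ball. -/
def FF (x : EuclideanSpace ℝ (Fin 3)) : EuclideanSpace ℝ (Fin 3) :=
  (Real.sqrt (Real.sqrt (dd x)) * ‖x‖⁻¹) • x

lemma FF_zero : FF 0 = 0 := by
  rw [FF, smul_zero]

lemma norm_FF {x : E3} (hx : x ≠ 0) : ‖FF x‖ = Real.sqrt (Real.sqrt (dd x)) := by
  have hn : (0:ℝ) < ‖x‖ := norm_pos_iff.mpr hx
  rw [FF, norm_smul, Real.norm_eq_abs, abs_of_nonneg (by positivity), mul_assoc,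
    inv_mul_cancel₀ (ne_of_gt hn), mul_one]

lemma norm_FF_le (x : E3) : ‖FF x‖ ≤ ‖x‖ := by
  rcases eq_or_ne x 0 with rfl | hx
  · rw [FF_zero]
  · rw [norm_FF hx]
    have h1 : dd x ≤ ‖x‖^4 := dd_le_norm x
    have h2 : Real.sqrt (dd x) ≤ Real.sqrt (‖x‖^4) := Real.sqrt_le_sqrt h1
    have h3 : Real.sqrt (‖x‖^4) = ‖x‖^2 := by
      rw [show ‖x‖^4 = (‖x‖^2)^2 by ring, Real.sqrt_sq (by positivity)]
    have h4 : Real.sqrt (Real.sqrt (dd x)) ≤ Real.sqrt (‖x‖^2) :=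
      Real.sqrt_le_sqrt (by rw [← h3] at *; exact h2)
    rwa [Real.sqrt_sq (norm_nonneg x)] at h4

lemma continuous_FF : Continuous FF := by
  rw [continuous_iff_continuousAt]
  intro x
  rcases eq_or_ne x 0 with rfl | hx
  · rw [ContinuousAt, FF_zero]
    exact squeeze_zero_norm norm_FF_le tendsto_norm_zero
  · have hn : ‖x‖ ≠ 0 := norm_ne_zero_iff.mpr hx
    refine ContinuousAt.smul (f := fun y => Real.sqrt (Real.sqrt (dd y)) * ‖y‖⁻¹) (g := fun y => y) ?_ ?_
    · exact (((Real.continuous_sqrt.comp Real.continuous_sqrt).comp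
        continuous_dd).continuousAt).mul ((continuous_norm.continuousAt).inv₀ hn)
    · exact continuousAt_id

def ballMap : {x : E3 | dd x ≤ 1} → Metric.closedBall (0:EuclideanSpace ℝ (Fin 3)) 1 :=
  fun x => ⟨FF x.1, by
    rw [Metric.mem_closedBall, dist_zero_right]
    rcases eq_or_ne (x : E3) 0 with h0 | h0
    · rw [h0, FF_zero, norm_zero]; norm_num
    · rw [norm_FF h0]
      have h1 : dd (x : E3) ≤ 1 := x.2
      have h2 : Real.sqrt (Real.sqrt (dd (x : E3))) ≤ Real.sqrt (Real.sqrt 1) :=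
        Real.sqrt_le_sqrt (Real.sqrt_le_sqrt h1)
      simpa using h2⟩

lemma FF_eq_zero_iff {x : E3} : FF x = 0 ↔ x = 0 := by
  constructor
  · intro h
    by_contra hx
    have h1 : ‖FF x‖ = Real.sqrt (Real.sqrt (dd x)) := norm_FF hx
    rw [h, norm_zero] at h1
    have h2 : 0 < Real.sqrt (Real.sqrt (dd x)) :=
      Real.sqrt_pos.mpr (Real.sqrt_pos.mpr (dd_pos hx))
    linarith [h1.symm]
  · rintro rfl
    exact FF_zero

lemma ballMap_bij : Function.Bijective ballMap := by
  constructor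
  · rintro ⟨x, hx⟩ ⟨y, hy⟩ h
    simp only [ballMap, Subtype.mk.injEq] at h
    rcases eq_or_ne x 0 with rfl | hx0
    · rw [FF_zero] at h
      have : y = 0 := FF_eq_zero_iff.mp h.symm
      exact Subtype.ext this.symm
    · have hy0 : y ≠ 0 := by
        intro h0
        rw [h0, FF_zero] at h
        exact hx0 (FF_eq_zero_iff.mp h)
      have hxn : (0:ℝ) < ‖x‖ := norm_pos_iff.mpr hx0
      have hyn : (0:ℝ) < ‖y‖ := norm_pos_iff.mpr hy0
      have hdx : 0 < dd x := dd_pos hx0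
      have hdy : 0 < dd y := dd_pos hy0
      -- equal norms give equal dd
      have hnorm : Real.sqrt (Real.sqrt (dd x)) = Real.sqrt (Real.sqrt (dd y)) := by
        rw [← norm_FF hx0, ← norm_FF hy0, h]
      have hddeq : dd x = dd y := by
        rw [← sqrt_sqrt_pow4 (le_of_lt hdx), ← sqrt_sqrt_pow4 (le_of_lt hdy), hnorm]
      -- FF x = FF y : cx • x = cy • y
      set cx := Real.sqrt (Real.sqrt (dd x)) * ‖x‖⁻¹ with hcx
      set cy := Real.sqrt (Real.sqrt (dd y)) * ‖y‖⁻¹ with hcy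
      have hcxpos : 0 < cx := by
        rw [hcx]
        have := Real.sqrt_pos.mpr (Real.sqrt_pos.mpr hdx)
        positivity
      have hcypos : 0 < cy := by
        rw [hcy]
        have := Real.sqrt_pos.mpr (Real.sqrt_pos.mpr hdy)
        positivity
      have hFF : cx • x = cy • y := h
      have hxy : x = (cx⁻¹ * cy) • y := by
        have h2 := congrArg (fun z : EuclideanSpace ℝ (Fin 3) => cx⁻¹ • z) hFF
        simp only [smul_smul] at h2
        rwa [inv_mul_cancel₀ (ne_of_gt hcxpos), one_smul] at h2
      set k := cx⁻¹ * cy with hk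
      have hkpos : 0 < k := by positivity
      have hddx : dd x = k^4 * dd y := by rw [hxy, dd_smul]
      have hk4 : k^4 = 1 := by
        rw [hddeq] at hddx
        have h' : (k^4 - 1) * dd y = 0 := by linear_combination -hddx
        rcases mul_eq_zero.mp h' with h'' | h''
        · linarith
        · exact absurd h'' (ne_of_gt hdy)
      have hk1 : k = 1 := pow4_eq_one hkpos hk4
      apply Subtype.ext
      show x = y
      rw [hxy, hk1, one_smul]
  · rintro ⟨y, hy⟩
    rw [Metric.mem_closedBall, dist_zero_right] at hy
    rcases eq_or_ne y 0 with rfl | hy0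
    · refine ⟨⟨0, ?_⟩, ?_⟩
      · show dd (0:E3) ≤ 1
        rw [dd_zero]; norm_num
      · apply Subtype.ext
        exact FF_zero
    · have hyn : (0:ℝ) < ‖y‖ := norm_pos_iff.mpr hy0
      have hd : 0 < dd y := dd_pos hy0
      have hsq : 0 < Real.sqrt (Real.sqrt (dd y)) :=
        Real.sqrt_pos.mpr (Real.sqrt_pos.mpr hd)
      set k := ‖y‖ * (Real.sqrt (Real.sqrt (dd y)))⁻¹ with hk
      have hkpos : 0 < k := by positivity
      have hddk : dd (k • y) = ‖y‖^4 := by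
        rw [dd_smul, hk, mul_pow, inv_pow, sqrt_sqrt_pow4 (le_of_lt hd)]
        field_simp
      refine ⟨⟨k • y, ?_⟩, ?_⟩
      · show dd (k • y) ≤ 1
        rw [hddk]
        have h2 : ‖y‖^2 ≤ 1 := by nlinarith [hy, norm_nonneg y]
        nlinarith [h2, sq_nonneg ‖y‖]
      · apply Subtype.ext
        show FF (k • y) = y
        have hky : k • y ≠ 0 := by
          intro h0
          have := smul_eq_zero.mp h0
          rcases this with h' | h'
          · exact (ne_of_gt hkpos) h'
          · exact hy0 h'
        rw [FF]
        have hn4 : Real.sqrt (Real.sqrt (dd (k • y))) = ‖y‖ := by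
          rw [hddk, show ‖y‖^4 = (‖y‖^2)^2 by ring, Real.sqrt_sq (by positivity),
            Real.sqrt_sq (norm_nonneg y)]
        have hnk : ‖k • y‖ = k * ‖y‖ := by
          rw [norm_smul, Real.norm_eq_abs, abs_of_pos hkpos]
        rw [hn4, hnk, smul_smul]
        have hscal : ‖y‖ * (k * ‖y‖)⁻¹ * k = 1 := by
          field_simp
        rw [hscal, one_smul]

lemma continuous_ballMap : Continuous ballMap := by
  apply Continuous.subtype_mk
  exact continuous_FF.comp continuous_subtype_val

lemma homeo_ball : Nonempty
    ({x : E3 | dd x ≤ 1} ≃ₜ Metric.closedBall (0:EuclideanSpace ℝ (Fin 3)) 1) := by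
  haveI : CompactSpace {x : E3 | dd x ≤ 1} := isCompact_iff_compactSpace.mp isCompact_ballSet
  exact ⟨Continuous.homeoOfEquivCompactToT2
    (f := Equiv.ofBijective ballMap ballMap_bij) continuous_ballMap⟩

end Aux

/-- the surface `S = H⁺ ∪ H⁻ ∪ R⁺ ∪ R⁻ ∪ Q` is homeomorphic to the
2-sphere, and the closure of the bounded component of `ℝ³ \ S` is homeomorphic to the
3-disc. -/
theorem canonical_chart_sphere_and_disc :
    Nonempty (↥Ssurf ≃ₜ Metric.sphere (0 : EuclideanSpace ℝ (Fin 3)) 1) ∧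
    Nonempty (↥(closure {x | x ∉ Ssurf ∧
        Bornology.IsBounded (connectedComponentIn Ssurfᶜ x)}) ≃ₜ
      Metric.closedBall (0 : EuclideanSpace ℝ (Fin 3)) 1) := by
  constructor
  · obtain ⟨e⟩ := homeo_sphere
    exact ⟨(Homeomorph.setCongr Ssurf_eq).trans e⟩
  · have hset : closure {x | x ∉ Ssurf ∧
        Bornology.IsBounded (connectedComponentIn Ssurfᶜ x)} =
        {x : EuclideanSpace ℝ (Fin 3) | dd x ≤ 1} := by
      rw [bounded_set_eq, closure_lt_eq]
    obtain ⟨e⟩ := homeo_ball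
    exact ⟨(Homeomorph.setCongr hset).trans e⟩

end
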